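/- Let c, g, v > 0 and f(0) > 0 with v > 2c/(g·f(0)). For s* = g − √(2·c·g/(f(0)·v)) we have s* ∈ (0, g) and the total cost across both sequencers equals 2·C(s*) = √(2·c·g·f(0)·v) − 2c. -/

import Mathlib

open Real

/-- TimeBoost, two separate sequencers. For v > 2c/(g·f(0)) and
s* = g − √(2·c·g/(f(0)·v)), we have s* ∈ (0, g) and the total cost across both sequencers is
2·C(s*) = 2·c·s*/(g−s*) = √(2·c·g·f(0)·v) − 2c. -/
theorem stmt_7 (c g v f0 : ℝ) (hc : 0 < c) (hg : 0 < g) (hv : 0 < v) (hf0 : 0 < f0)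
    (hint : v > 2 * c / (g * f0)) :
    0 < g - Real.sqrt (2 * c * g / (f0 * v)) ∧ g - Real.sqrt (2 * c * g / (f0 * v)) < g ∧
    2 * (c * (g - Real.sqrt (2 * c * g / (f0 * v))) /
        (g - (g - Real.sqrt (2 * c * g / (f0 * v))))) =
      Real.sqrt (2 * c * g * f0 * v) - 2 * c := by
  have hA : (0:ℝ) < 2 * c * g / (f0 * v) := by positivity
  set r := Real.sqrt (2 * c * g / (f0 * v)) with hr
  have hrpos : 0 < r := Real.sqrt_pos.mpr hA
  have hAg : 2 * c * g / (f0 * v) < g ^ 2 := by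
    rw [div_lt_iff₀ (by positivity)]
    have h2c : 2 * c < v * (g * f0) := (div_lt_iff₀ (by positivity)).mp hint
    nlinarith
  have hrg : r < g := by
    have := Real.sqrt_lt_sqrt hA.le hAg
    rwa [Real.sqrt_sq hg.le] at this
  refine ⟨by linarith, by linarith, ?_⟩
  have hkey : r * Real.sqrt (2 * c * g * f0 * v) = 2 * c * g := by
    rw [hr, ← Real.sqrt_mul hA.le]
    have : 2 * c * g / (f0 * v) * (2 * c * g * f0 * v) = (2 * c * g) ^ 2 := by
      field_simp
    rw [this, Real.sqrt_sq (by positivity)]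
  have : g - (g - r) = r := by ring
  rw [this]
  set S := Real.sqrt (2 * c * g * f0 * v) with hS
  field_simp
  nlinarith [hkey]
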